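/- Let Δ be a d-dimensional simplicial complex, i < d, and let Δ^{[i]} be the complex generated by the i-faces of Δ. If {j₁,…,j_{i+2}} is an (i+1)-face of Δ, then the squarefree monomial m = x_{j₁}⋯x_{j_{i+2}} lies in the second symbolic power F(Δ^{[i]})^{(2)} but not in F(Δ^{[i]})². -/

import Mathlib

open Finset MvPolynomial

private lemma prodX_eq_monomial {n : ℕ} (s : Finset (Fin n)) :
    ∏ l ∈ s, (X l : MvPolynomial (Fin n) ℚ) =
      monomial (∑ l ∈ s, Finsupp.single l 1) 1 := by
  classical
  induction s using Finset.induction with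
  | empty => simp [monomial_eq]
  | insert _ _ h ih =>
    rw [Finset.prod_insert h, Finset.sum_insert h, ih, X, monomial_mul, one_mul]

private lemma deg_sum_single {n : ℕ} (s : Finset (Fin n)) :
    (∑ l ∈ s, Finsupp.single l 1).sum (fun _ e => e) = s.card := by
  classical
  induction s using Finset.induction with
  | empty => simp
  | insert _ _ h ih =>
    rw [Finset.sum_insert h, Finsupp.sum_add_index' (fun _ => rfl) (fun _ _ _ => rfl),
      ih, Finset.card_insert_of_notMem h, Finsupp.sum_single_index rfl]
    omega

private lemma mem_deg_ge {n i : ℕ}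
    {I : Ideal (MvPolynomial (Fin n) ℚ)}
    {S : Set (MvPolynomial (Fin n) ℚ)} (hIS : I = Ideal.span S)
    (hS : ∀ p ∈ S, ∀ u ∈ p.support, i + 1 ≤ u.sum (fun _ e => e))
    {f : MvPolynomial (Fin n) ℚ} (hf : f ∈ I) :
    ∀ u ∈ f.support, i + 1 ≤ u.sum (fun _ e => e) := by
  classical
  subst hIS
  refine Submodule.span_induction (p := fun f _ => ∀ u ∈ f.support, i + 1 ≤ u.sum (fun _ e => e))
    ?_ ?_ ?_ ?_ hf
  · exact hS
  · simp
  · intro a b _ _ ha hb u hu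
    rcases Finset.mem_union.1 (MvPolynomial.support_add hu) with h | h
    · exact ha u h
    · exact hb u h
  · intro r a _ ha u hu
    rw [smul_eq_mul] at hu
    obtain ⟨u₁, hu₁, u₂, hu₂, rfl⟩ :=
      Finset.mem_add.1 (MvPolynomial.support_mul r a hu)
    rw [Finsupp.sum_add_index' (fun _ => rfl) (fun _ _ _ => rfl)]
    exact le_add_of_nonneg_of_le (Nat.zero_le _) (ha u₂ hu₂)

/-- Let `Δ` be a `d`-dimensional simplicial complex, `1 ≤ i < d`, and `F(Δ^{[i]})` the
facet ideal of the complex generated by the `i`-faces of `Δ`. If `σ` is an `(i+1)`-face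
of `Δ` (so `|σ| = i + 2`), then the squarefree monomial `m = ∏_{l ∈ σ} x_l` lies in the
second symbolic power of `F(Δ^{[i]})` — i.e. in `P²` for every minimal prime `P` —
but not in `F(Δ^{[i]})²`. -/
theorem stmt12 {n d i : ℕ} (hi : 1 ≤ i) (hid : i < d)
    (Δ : Finset (Finset (Fin n)))
    (hdown : ∀ σ ∈ Δ, ∀ τ ⊆ σ, τ ∈ Δ)
    (hdim : ∀ σ ∈ Δ, σ.card ≤ d + 1)
    (σ : Finset (Fin n)) (hσ : σ ∈ Δ) (hcard : σ.card = i + 2)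
    (I : Ideal (MvPolynomial (Fin n) ℚ))
    (hI : I = Ideal.span {p | ∃ τ ∈ Δ, τ.card = i + 1 ∧ p = ∏ l ∈ τ, X l}) :
    (∀ P ∈ I.minimalPrimes, (∏ l ∈ σ, X l) ∈ P ^ 2) ∧
      (∏ l ∈ σ, X l) ∉ I ^ 2 := by
  classical
  have hgen : ∀ τ ⊆ σ, τ.card = i + 1 → (∏ l ∈ τ, (X l : MvPolynomial (Fin n) ℚ)) ∈ I := by
    intro τ hτ hc
    rw [hI]
    exact Ideal.subset_span ⟨τ, hdown σ hσ τ hτ, hc, rfl⟩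
  constructor
  · intro P hP
    have hprime : P.IsPrime := hP.1.1
    have hIP : I ≤ P := hP.1.2
    -- find two distinct variables of σ in P
    have hvar : ∀ τ ⊆ σ, τ.card = i + 1 → ∃ a ∈ τ, (X a : MvPolynomial (Fin n) ℚ) ∈ P := by
      intro τ hτ hc
      exact (Ideal.IsPrime.prod_mem_iff).1 (hIP (hgen τ hτ hc))
    obtain ⟨τ₁, hτ₁, hc₁⟩ := Finset.exists_subset_card_eq (n := i + 1) (s := σ) (by omega)
    obtain ⟨a, haτ, haP⟩ := hvar τ₁ hτ₁ hc₁
    have haσ : a ∈ σ := hτ₁ haτ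
    have hcae : (σ.erase a).card = i + 1 := by
      rw [Finset.card_erase_of_mem haσ, hcard]; omega
    obtain ⟨b, hbτ, hbP⟩ := hvar (σ.erase a) (Finset.erase_subset _ _) hcae
    have hbσ : b ∈ σ := Finset.mem_of_mem_erase hbτ
    have hab : b ≠ a := Finset.ne_of_mem_erase hbτ
    have hsplit : (∏ l ∈ σ, (X l : MvPolynomial (Fin n) ℚ)) =
        (X a * X b) * ∏ l ∈ (σ.erase a).erase b, X l := by
      rw [mul_assoc, Finset.mul_prod_erase _ _ hbτ, Finset.mul_prod_erase _ _ haσ]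
    rw [hsplit, sq]
    exact Ideal.mul_mem_right _ _ (Ideal.mul_mem_mul haP hbP)
  · intro hmem
    have hS : ∀ p ∈ {p : MvPolynomial (Fin n) ℚ | ∃ τ ∈ Δ, τ.card = i + 1 ∧ p = ∏ l ∈ τ, X l},
        ∀ u ∈ p.support, i + 1 ≤ u.sum (fun _ e => e) := by
      rintro p ⟨τ, _, hc, rfl⟩ u hu
      rw [prodX_eq_monomial, MvPolynomial.support_monomial, if_neg one_ne_zero] at hu
      rw [Finset.mem_singleton.1 hu, deg_sum_single, hc]
    have hI2 : ∀ u ∈ (∏ l ∈ σ, (X l : MvPolynomial (Fin n) ℚ)).support,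
        2 * (i + 1) ≤ u.sum (fun _ e => e) := by
      rw [sq] at hmem
      refine Submodule.mul_induction_on hmem ?_ ?_
      · intro f hf g hg u hu
        obtain ⟨u₁, hu₁, u₂, hu₂, rfl⟩ := Finset.mem_add.1 (MvPolynomial.support_mul f g hu)
        rw [Finsupp.sum_add_index' (fun _ => rfl) (fun _ _ _ => rfl)]
        have h1 := mem_deg_ge hI hS hf u₁ hu₁
        have h2 := mem_deg_ge hI hS hg u₂ hu₂
        omega
      · intro f g hf hg u hu
        rcases Finset.mem_union.1 (MvPolynomial.support_add hu) with h | h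
        · exact hf u h
        · exact hg u h
    have hu : (∑ l ∈ σ, Finsupp.single l 1) ∈
        (∏ l ∈ σ, (X l : MvPolynomial (Fin n) ℚ)).support := by
      rw [prodX_eq_monomial, MvPolynomial.support_monomial, if_neg one_ne_zero]
      exact Finset.mem_singleton_self _
    have := hI2 _ hu
    rw [deg_sum_single, hcard] at this
    omega
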